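/- arXiv:2307.16502 — 5 statements merged into one kernel-verified Lean document; each statement's English description precedes it below -/
import Mathlib

section
/- Let or(·) be any map assigning to each undirected edge a of G one of its two directed orientations. Then for any two undirected edges a, b of G, the sum B_{or(a),or(b)} + B_{or(a),or(b)⁻¹} + B_{or(a)⁻¹,or(b)} + B_{or(a)⁻¹,or(b)⁻¹} equals 1 if a ≠ b and a and b share a common endpoint, and equals 0 otherwise. In particular, arranging these sums into an m×m matrix yields the adjacency matrix of the line-graph of G. -/
open Matrix

/-- The non-backtracking matrix of a finite simple graph, indexed by darts
(directed edges): `B e f = 1` iff the end of `f` is the start of `e` and the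
start of `f` is not the end of `e`. -/
def nonBacktracking {V : Type*} [DecidableEq V] (G : SimpleGraph V) :
    Matrix G.Dart G.Dart ℝ := fun e f =>
  if f.snd = e.fst ∧ f.fst ≠ e.snd then 1 else 0

set_option maxHeartbeats 1000000 in
open scoped Classical in
/-- For any orientation map `or` assigning to each undirected edge one of its two darts,
the sum of the four entries of the non-backtracking matrix `B` over the orientations of
two undirected edges `a, b` equals `1` if `a ≠ b` and `a, b` share an endpoint, and `0`
otherwise; i.e., these sums form the adjacency matrix of the line-graph of `G`. -/
theorem nonBacktracking_sum_eq_lineGraph_adjMatrix {V : Type*} [Fintype V] [DecidableEq V]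
    (G : SimpleGraph V) [DecidableRel G.Adj]
    (or : G.edgeSet → G.Dart) (hor : ∀ a : G.edgeSet, (or a).edge = (a : Sym2 V)) :
    (∀ a b : G.edgeSet,
      nonBacktracking G (or a) (or b) + nonBacktracking G (or a) (or b).symm +
        nonBacktracking G (or a).symm (or b) + nonBacktracking G (or a).symm (or b).symm =
      if a ≠ b ∧ ∃ v, v ∈ (a : Sym2 V) ∧ v ∈ (b : Sym2 V) then 1 else 0) ∧
    (fun a b : G.edgeSet =>
      nonBacktracking G (or a) (or b) + nonBacktracking G (or a) (or b).symm +
        nonBacktracking G (or a).symm (or b) + nonBacktracking G (or a).symm (or b).symm) =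
      (G.lineGraph).adjMatrix ℝ := by
  have key : ∀ a b : G.edgeSet,
      nonBacktracking G (or a) (or b) + nonBacktracking G (or a) (or b).symm +
        nonBacktracking G (or a).symm (or b) + nonBacktracking G (or a).symm (or b).symm =
      if a ≠ b ∧ ∃ v, v ∈ (a : Sym2 V) ∧ v ∈ (b : Sym2 V) then 1 else 0 := by
    intro a b
    set d := or a with hda
    set e := or b with hdb
    have ha : (a : Sym2 V) = s(d.fst, d.snd) := (hor a).symm
    have hb : (b : Sym2 V) = s(e.fst, e.snd) := (hor b).symm
    have hab : (a ≠ b) ↔ s(d.fst, d.snd) ≠ s(e.fst, e.snd) := by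
      rw [← ha, ← hb, ne_eq, ne_eq, Subtype.ext_iff]
    have huv : d.fst ≠ d.snd := G.ne_of_adj d.adj
    have hpq : e.fst ≠ e.snd := G.ne_of_adj e.adj
    obtain ⟨⟨u, v⟩, hd⟩ := d
    obtain ⟨⟨p, q⟩, he⟩ := e
    simp only [SimpleGraph.Dart.symm, nonBacktracking, Prod.swap] at *
    simp only [hab, ha, hb, Sym2.mem_iff, Sym2.eq_iff, exists_eq_or_imp, exists_eq_left]
    clear hda hdb hab ha hb hor
    split_ifs <;> norm_num <;>
      simp only [Sym2.eq_iff, not_and, not_or, ne_eq] at * <;> grind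
  refine ⟨key, ?_⟩
  ext a b
  rw [key a b]
  simp [SimpleGraph.adjMatrix_apply, SimpleGraph.lineGraph_adj_iff_exists]
end

section
/- For every real vector x indexed by the directed edges of a finite simple graph G, the non-backtracking matrix B satisfies Startᵀ (B x) = (D − I) Endᵀ x and Endᵀ (B x) = A (Endᵀ x) − Startᵀ x, where A is the adjacency matrix, D the diagonal degree matrix, and I the identity matrix of G. Equivalently, writing x^out = Startᵀ x and x^in = Endᵀ x, one has (Bx)^out_i = (d_i − 1) x^in_i and (Bx)^in_i = Σ_{j ∼ i} x^in_j − x^out_i for every node i. -/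
open Matrix

/-- The end matrix of a graph: `End e i = 1` iff node `i` is the end of dart `e`. -/
def endMatrix {V : Type*} [DecidableEq V] (G : SimpleGraph V) :
    Matrix G.Dart V ℝ := fun e i => if e.snd = i then 1 else 0

/-- The start matrix of a graph: `Start e i = 1` iff node `i` is the start of dart `e`. -/
def startMatrix {V : Type*} [DecidableEq V] (G : SimpleGraph V) :
    Matrix G.Dart V ℝ := fun e i => if e.fst = i then 1 else 0

section Aux

variable {V : Type*} [Fintype V] [DecidableEq V] (G : SimpleGraph V) [DecidableRel G.Adj]

lemma sum_ind_fst (i : V) :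
    (∑ e : G.Dart, (if e.fst = i then (1:ℝ) else 0)) = (G.degree i : ℝ) := by
  rw [Finset.sum_boole]
  norm_cast
  exact G.dart_fst_fiber_card_eq_degree i

lemma count1 (i : V) (f : G.Dart) :
    (∑ e : G.Dart, (if e.fst = i then (1:ℝ) else 0) *
      (if f.snd = e.fst ∧ f.fst ≠ e.snd then 1 else 0))
      = if f.snd = i then (G.degree i : ℝ) - 1 else 0 := by
  by_cases h : f.snd = i
  · have hadj : G.Adj i f.fst := h ▸ f.adj.symm
    have key : ∀ e : G.Dart,
        (if e.fst = i then (1:ℝ) else 0) *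
          (if f.snd = e.fst ∧ f.fst ≠ e.snd then 1 else 0)
        = (if e.fst = i then (1:ℝ) else 0) - (if e = f.symm then 1 else 0) := by
      intro e
      by_cases he : e = f.symm
      · subst he
        simp [SimpleGraph.Dart.symm, h]
      · by_cases hf : e.fst = i
        · have hne : f.fst ≠ e.snd := by
            intro hsnd
            apply he
            apply SimpleGraph.Dart.ext
            ext
            · simp [SimpleGraph.Dart.symm, hf, h]
            · simp [SimpleGraph.Dart.symm, hsnd.symm]
          simp [hf, h, hne, he]
        · simp [hf, he]
    rw [Finset.sum_congr rfl fun e _ => key e, Finset.sum_sub_distrib, sum_ind_fst,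
      Finset.sum_ite_eq' Finset.univ f.symm (fun _ => (1:ℝ))]
    simp [h]
  · rw [if_neg h]
    apply Finset.sum_eq_zero
    intro e _
    by_cases hf : e.fst = i
    · have : ¬ (f.snd = e.fst ∧ f.fst ≠ e.snd) := by
        rintro ⟨h1, _⟩
        exact h (h1.trans hf)
      simp [this]
    · simp [hf]

lemma count2 (i : V) (f : G.Dart) :
    (∑ e : G.Dart, (if e.snd = i then (1:ℝ) else 0) *
      (if f.snd = e.fst ∧ f.fst ≠ e.snd then 1 else 0))
      = (if G.Adj i f.snd then 1 else 0) - (if f.fst = i then 1 else 0) := by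
  by_cases hadj : G.Adj i f.snd
  · set d0 : G.Dart := ⟨(f.snd, i), hadj.symm⟩ with hd0
    by_cases hfi : f.fst = i
    · rw [if_pos hadj, if_pos hfi, sub_self]
      apply Finset.sum_eq_zero
      intro e _
      by_cases he : e.snd = i
      · have : ¬ (f.snd = e.fst ∧ f.fst ≠ e.snd) := by
          rintro ⟨_, h2⟩
          exact h2 (hfi.trans he.symm)
        simp [this]
      · simp [he]
    · have key : ∀ e : G.Dart,
          (if e.snd = i then (1:ℝ) else 0) *
            (if f.snd = e.fst ∧ f.fst ≠ e.snd then 1 else 0)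
          = if e = d0 then 1 else 0 := by
        intro e
        by_cases he : e = d0
        · subst he
          have : f.fst ≠ (d0 : G.Dart).snd := hfi
          simp [hd0, this, hfi]
        · have : ¬ (e.snd = i ∧ f.snd = e.fst ∧ f.fst ≠ e.snd) := by
            rintro ⟨h1, h2, _⟩
            apply he
            apply SimpleGraph.Dart.ext
            ext
            · exact h2.symm
            · exact h1
          by_cases h1 : e.snd = i
          · by_cases h2 : f.snd = e.fst ∧ f.fst ≠ e.snd
            · exact absurd ⟨h1, h2.1, h2.2⟩ this
            · simp [h2, he]
          · simp [h1, he]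
      rw [Finset.sum_congr rfl fun e _ => key e,
        Finset.sum_ite_eq' Finset.univ d0 (fun _ => (1:ℝ))]
      simp [hadj, hfi]
  · have hfi : f.fst ≠ i := by
      intro h
      exact hadj (h ▸ f.adj)
    rw [if_neg hadj, if_neg hfi, sub_zero]
    apply Finset.sum_eq_zero
    intro e _
    by_cases h1 : e.snd = i
    · have : ¬ (f.snd = e.fst ∧ f.fst ≠ e.snd) := by
        rintro ⟨h2, _⟩
        exact hadj ((h1 ▸ h2 ▸ e.adj).symm)
      simp [this]
    · simp [h1]

lemma pointwise1 (x : G.Dart → ℝ) (i : V) :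
    (startMatrix G)ᵀ.mulVec ((nonBacktracking G).mulVec x) i =
      ((G.degree i : ℝ) - 1) * (endMatrix G)ᵀ.mulVec x i := by
  simp only [mulVec, dotProduct, transpose_apply, startMatrix, endMatrix, nonBacktracking]
  rw [Finset.mul_sum]
  calc ∑ e : G.Dart, (if e.fst = i then (1:ℝ) else 0) *
        ∑ f : G.Dart, (if f.snd = e.fst ∧ f.fst ≠ e.snd then 1 else 0) * x f
      = ∑ f : G.Dart, (∑ e : G.Dart, (if e.fst = i then (1:ℝ) else 0) *
          (if f.snd = e.fst ∧ f.fst ≠ e.snd then 1 else 0)) * x f := by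
        simp_rw [Finset.mul_sum, Finset.sum_mul]
        rw [Finset.sum_comm]
        simp_rw [mul_assoc]
    _ = ∑ f : G.Dart, (((G.degree i : ℝ) - 1) * ((if f.snd = i then 1 else 0) * x f)) := by
        apply Finset.sum_congr rfl
        intro f _
        rw [count1]
        by_cases h : f.snd = i <;> simp [h]
    _ = _ := rfl

lemma pointwise2 (x : G.Dart → ℝ) (i : V) :
    (endMatrix G)ᵀ.mulVec ((nonBacktracking G).mulVec x) i =
      (G.adjMatrix ℝ).mulVec ((endMatrix G)ᵀ.mulVec x) i -
        (startMatrix G)ᵀ.mulVec x i := by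
  rw [SimpleGraph.adjMatrix_mulVec_apply]
  simp only [mulVec, dotProduct, transpose_apply, startMatrix, endMatrix, nonBacktracking]
  calc ∑ e : G.Dart, (if e.snd = i then (1:ℝ) else 0) *
        ∑ f : G.Dart, (if f.snd = e.fst ∧ f.fst ≠ e.snd then 1 else 0) * x f
      = ∑ f : G.Dart, (∑ e : G.Dart, (if e.snd = i then (1:ℝ) else 0) *
          (if f.snd = e.fst ∧ f.fst ≠ e.snd then 1 else 0)) * x f := by
        simp_rw [Finset.mul_sum, Finset.sum_mul]
        rw [Finset.sum_comm]
        simp_rw [mul_assoc]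
    _ = ∑ f : G.Dart, (((if G.Adj i f.snd then (1:ℝ) else 0) * x f) -
          ((if f.fst = i then 1 else 0) * x f)) := by
        apply Finset.sum_congr rfl
        intro f _
        rw [count2, sub_mul]
    _ = (∑ f : G.Dart, (if G.Adj i f.snd then (1:ℝ) else 0) * x f) -
          ∑ f : G.Dart, (if f.fst = i then (1:ℝ) else 0) * x f := by
        rw [Finset.sum_sub_distrib]
    _ = (∑ j ∈ G.neighborFinset i, ∑ f : G.Dart, (if f.snd = j then (1:ℝ) else 0) * x f) -
          ∑ f : G.Dart, (if f.fst = i then (1:ℝ) else 0) * x f := by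
        congr 1
        rw [Finset.sum_comm]
        apply Finset.sum_congr rfl
        intro f _
        simp only [ite_mul, one_mul, zero_mul, Finset.sum_ite_eq,
          SimpleGraph.mem_neighborFinset]

end Aux

/-- `Startᵀ (B x) = (D − I) Endᵀ x` and `Endᵀ (B x) = A (Endᵀ x) − Startᵀ x`;
equivalently, writing `x^out = Startᵀ x` and `x^in = Endᵀ x`,
`(Bx)^out_i = (d_i − 1) x^in_i` and `(Bx)^in_i = Σ_{j ∼ i} x^in_j − x^out_i`. -/
theorem nonBacktracking_inout_relations {V : Type*} [Fintype V] [DecidableEq V]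
    (G : SimpleGraph V) [DecidableRel G.Adj] (x : G.Dart → ℝ) :
    ((startMatrix G)ᵀ.mulVec ((nonBacktracking G).mulVec x) =
        (Matrix.diagonal (fun i => (G.degree i : ℝ)) - 1).mulVec
          ((endMatrix G)ᵀ.mulVec x)) ∧
    ((endMatrix G)ᵀ.mulVec ((nonBacktracking G).mulVec x) =
        (G.adjMatrix ℝ).mulVec ((endMatrix G)ᵀ.mulVec x) -
          (startMatrix G)ᵀ.mulVec x) ∧
    (∀ i : V, (startMatrix G)ᵀ.mulVec ((nonBacktracking G).mulVec x) i =
        ((G.degree i : ℝ) - 1) * (endMatrix G)ᵀ.mulVec x i) ∧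
    (∀ i : V, (endMatrix G)ᵀ.mulVec ((nonBacktracking G).mulVec x) i =
        (∑ j ∈ G.neighborFinset i, (endMatrix G)ᵀ.mulVec x j) -
          (startMatrix G)ᵀ.mulVec x i) := by
  refine ⟨?_, ?_, pointwise1 G x, ?_⟩
  · funext i
    rw [pointwise1, Matrix.sub_mulVec, Matrix.one_mulVec, Pi.sub_apply,
      mulVec_diagonal, sub_mul, one_mul]
  · funext i
    exact pointwise2 G x i
  · intro i
    rw [pointwise2, SimpleGraph.adjMatrix_mulVec_apply]
end

section
/- If x is a real right eigenvector of the non-backtracking matrix B of a finite simple graph on n nodes with real eigenvalue μ (B x = μ x), then the 2n-dimensional vector (x^out, x^in), where x^out = Startᵀ x and x^in = Endᵀ x, is a right eigenvector of the 2n×2n matrix K = [[0, D − I], [−I, A]] with the same eigenvalue μ; moreover, if μ ≠ 0, then x^out = (1/μ)(D − I) x^in. -/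
open Matrix

/-- The `2n × 2n` matrix `K = [[0, D − I], [−I, A]]`. -/
def Kmatrix {V : Type*} [Fintype V] [DecidableEq V] (G : SimpleGraph V)
    [DecidableRel G.Adj] : Matrix (V ⊕ V) (V ⊕ V) ℝ :=
  Matrix.fromBlocks 0 (Matrix.diagonal (fun i => (G.degree i : ℝ)) - 1) (-1) (G.adjMatrix ℝ)

section Aux

variable {V : Type*} [Fintype V] [DecidableEq V] (G : SimpleGraph V) [DecidableRel G.Adj]

/-- The equivalence sending a dart to its reverse. -/
def dartSymmEquiv : G.Dart ≃ G.Dart :=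
  ⟨SimpleGraph.Dart.symm, SimpleGraph.Dart.symm,
    SimpleGraph.Dart.symm_symm, SimpleGraph.Dart.symm_symm⟩

lemma sum_darts_symm (g : G.Dart → ℝ) :
    ∑ e : G.Dart, g e.symm = ∑ e : G.Dart, g e :=
  Fintype.sum_equiv (dartSymmEquiv G) _ _ (fun e => by simp [dartSymmEquiv])

/-- Darts as a sigma type over their start vertex. -/
def dartSigmaEquiv : G.Dart ≃ Σ v, G.neighborSet v :=
  { toFun := fun d => ⟨d.fst, d.snd, d.adj⟩
    invFun := fun s => ⟨(s.fst, s.snd), s.snd.property⟩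
    left_inv := fun d => by ext <;> simp
    right_inv := fun s => by ext <;> simp }

lemma sum_darts_fst (g : V → ℝ) (i : V) :
    ∑ e : G.Dart, (if e.fst = i then g e.snd else 0) = ∑ j ∈ G.neighborFinset i, g j := by
  have h1 : (∑ e : G.Dart, (if e.fst = i then g e.snd else 0))
      = ∑ s : Σ v, G.neighborSet v, (if s.1 = i then g s.2 else 0) :=
    Fintype.sum_equiv (dartSigmaEquiv G) _ _ (fun e => rfl)
  rw [h1, ← Finset.univ_sigma_univ, Finset.sum_sigma]
  rw [Finset.sum_eq_single_of_mem i (Finset.mem_univ i)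
    (fun v _ hv => by simp [hv])]
  simp only [if_pos rfl]
  rw [SimpleGraph.neighborFinset_def]
  exact Finset.sum_set_coe (f := g) _

end Aux

/-- If `B x = μ x`, then the vector `(x^out, x^in)`, with `x^out = Startᵀ x`
and `x^in = Endᵀ x`, is a right eigenvector of `K = [[0, D − I], [−I, A]]`
with the same eigenvalue `μ`; moreover, if `μ ≠ 0`, then
`x^out = (1/μ)(D − I) x^in`. -/
theorem nonBacktracking_eigenvector_to_K {V : Type*} [Fintype V] [DecidableEq V]
    (G : SimpleGraph V) [DecidableRel G.Adj] (x : G.Dart → ℝ) (μ : ℝ)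
    (hx : (nonBacktracking G).mulVec x = μ • x) :
    ((Kmatrix G).mulVec
        (Sum.elim ((startMatrix G)ᵀ.mulVec x) ((endMatrix G)ᵀ.mulVec x)) =
      μ • Sum.elim ((startMatrix G)ᵀ.mulVec x) ((endMatrix G)ᵀ.mulVec x)) ∧
    (μ ≠ 0 → (startMatrix G)ᵀ.mulVec x =
        μ⁻¹ • (Matrix.diagonal (fun i => (G.degree i : ℝ)) - 1).mulVec
          ((endMatrix G)ᵀ.mulVec x)) := by
  set xout : V → ℝ := (startMatrix G)ᵀ.mulVec x with hxout
  set xin : V → ℝ := (endMatrix G)ᵀ.mulVec x with hxin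
  have hout : ∀ i, xout i = ∑ e : G.Dart, (if e.fst = i then x e else 0) := by
    intro i
    simp [hxout, mulVec, startMatrix, transpose, dotProduct, ite_mul]
  have hin : ∀ i, xin i = ∑ e : G.Dart, (if e.snd = i then x e else 0) := by
    intro i
    simp [hxin, mulVec, endMatrix, transpose, dotProduct, ite_mul]
  -- the eigenvector equation pointwise
  have key : ∀ e : G.Dart, xin e.fst - x e.symm = μ * x e := by
    intro e
    have h := congrFun hx e
    simp only [mulVec, dotProduct, Pi.smul_apply, smul_eq_mul, nonBacktracking,
      ite_mul, one_mul, zero_mul] at h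
    rw [← h, hin]
    have hsplit : ∀ f : G.Dart,
        (if f.snd = e.fst then x f else 0) - (if f = e.symm then x f else 0)
          = if f.snd = e.fst ∧ f.fst ≠ e.snd then x f else 0 := by
      intro f
      have hiff : f = e.symm ↔ f.snd = e.fst ∧ f.fst = e.snd := by
        constructor
        · rintro rfl; simp
        · rintro ⟨h1, h2⟩
          apply SimpleGraph.Dart.toProd_injective
          ext <;> simp [h1, h2]
      by_cases h1 : f.snd = e.fst <;> by_cases h2 : f.fst = e.snd <;>
        simp [h1, h2, hiff]
    calc (∑ f : G.Dart, (if f.snd = e.fst then x f else 0)) - x e.symm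
        = ∑ f : G.Dart, ((if f.snd = e.fst then x f else 0)
            - (if f = e.symm then x f else 0)) := by
          rw [Finset.sum_sub_distrib, Finset.sum_ite_eq' Finset.univ e.symm x]
          simp
      _ = ∑ f : G.Dart, (if f.snd = e.fst ∧ f.fst ≠ e.snd then x f else 0) :=
          Finset.sum_congr rfl fun f _ => hsplit f
  -- L1 : μ * xout i = (deg i - 1) * xin i
  have L1 : ∀ i, μ * xout i = ((G.degree i : ℝ) - 1) * xin i := by
    intro i
    rw [hout, Finset.mul_sum]
    have : ∀ e : G.Dart, μ * (if e.fst = i then x e else 0)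
        = (if e.fst = i then xin i else 0) - (if e.fst = i then x e.symm else 0) := by
      intro e
      by_cases h : e.fst = i
      · subst h
        simp only [if_pos rfl]
        exact (key e).symm
      · simp [h]
    rw [Finset.sum_congr rfl fun e _ => this e, Finset.sum_sub_distrib]
    have hc1 : ∑ e : G.Dart, (if e.fst = i then xin i else 0)
        = (G.degree i : ℝ) * xin i := by
      rw [sum_darts_fst G (fun _ => xin i) i]
      simp [mul_comm]
    have hc2 : ∑ e : G.Dart, (if e.fst = i then x e.symm else 0) = xin i := by
      have := sum_darts_symm G (fun e => if e.fst = i then x e.symm else 0)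
      simp only [SimpleGraph.Dart.symm_symm] at this
      rw [← this, hin]
      exact Finset.sum_congr rfl fun e _ => by simp
    rw [hc1, hc2]; ring
  -- L2 : μ * xin i = (A xin) i - xout i
  have L2 : ∀ i, μ * xin i = (∑ j ∈ G.neighborFinset i, xin j) - xout i := by
    intro i
    rw [hin, Finset.mul_sum]
    have : ∀ e : G.Dart, μ * (if e.snd = i then x e else 0)
        = (if e.snd = i then xin e.fst else 0) - (if e.snd = i then x e.symm else 0) := by
      intro e
      by_cases h : e.snd = i
      · simp only [if_pos h]
        exact (key e).symm
      · simp [h]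
    rw [Finset.sum_congr rfl fun e _ => this e, Finset.sum_sub_distrib]
    have hc1 : ∑ e : G.Dart, (if e.snd = i then xin e.fst else 0)
        = ∑ j ∈ G.neighborFinset i, xin j := by
      have := sum_darts_symm G (fun e => if e.snd = i then xin e.fst else 0)
      simp only [SimpleGraph.Dart.symm_toProd, Prod.snd_swap, Prod.fst_swap] at this
      rw [← this]
      exact sum_darts_fst G xin i
    have hc2 : ∑ e : G.Dart, (if e.snd = i then x e.symm else 0) = xout i := by
      have := sum_darts_symm G (fun e => if e.snd = i then x e.symm else 0)
      simp only [SimpleGraph.Dart.symm_symm, SimpleGraph.Dart.symm_toProd,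
        Prod.snd_swap] at this
      rw [← this, hout]
    rw [hc1, hc2]
  constructor
  · funext i
    rw [Kmatrix, fromBlocks_mulVec]
    cases i with
    | inl i =>
      simp only [Sum.elim_inl, Pi.add_apply, Pi.smul_apply, smul_eq_mul,
        zero_mulVec, Pi.zero_apply, zero_add, sub_mulVec, Pi.sub_apply,
        mulVec_diagonal, one_mulVec, Sum.elim_comp_inl, Sum.elim_comp_inr,
        Function.comp_apply]
      rw [L1 i]; ring
    | inr i =>
      simp only [Sum.elim_inr, Pi.add_apply, Pi.smul_apply, smul_eq_mul,
        neg_mulVec, one_mulVec, Pi.neg_apply, SimpleGraph.adjMatrix_mulVec_apply,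
        Sum.elim_comp_inl, Sum.elim_comp_inr, Function.comp_apply]
      rw [L2 i]; ring
  · intro hμ
    funext i
    simp only [Pi.smul_apply, smul_eq_mul, sub_mulVec, Pi.sub_apply,
      mulVec_diagonal, one_mulVec]
    rw [show ((G.degree i : ℝ)) * xin i - xin i = ((G.degree i : ℝ) - 1) * xin i by ring,
      ← L1 i, ← mul_assoc, inv_mul_cancel₀ hμ, one_mul]
end

section
/- Let ũ ∈ ℝ^k, let u ∈ ℝ^n be its inflated version (u_i = ũ_{σ(i)} for every node i), and let ν be a real number. Then Ā u = ν u holds if and only if (R C) ũ = ν ũ, and this in turn holds if and only if (R^{1/2} C R^{1/2}) v = ν v where v = R^{1/2} ũ. -/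
open Matrix Finset

/-- **Inflation–deflation of eigenvectors in the stochastic block model.**
Let `σ` be a surjective cluster assignment of `n` nodes into `k` clusters, `C` a
symmetric affinity matrix, `Ā` the inflated matrix with entries `C (σ i) (σ j) / n`,
`R` the diagonal matrix of relative cluster sizes and `u` the inflated version of
`ũ`. Then `Ā u = ν u` iff `ũ (R C) = ν ũ` (as an eigenvector relation for `R C`),
iff `(R^{1/2} C R^{1/2}) v = ν v` where `v = R^{1/2} ũ`. -/
theorem inflated_eigen_iff_deflated {n k : ℕ} (hn : 0 < n) (hk : 0 < k)
    (σ : Fin n → Fin k) (hσ : Function.Surjective σ)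
    (C : Matrix (Fin k) (Fin k) ℝ) (hC : C.IsSymm)
    (ut : Fin k → ℝ) (u : Fin n → ℝ) (hu : ∀ i, u i = ut (σ i)) (ν : ℝ) :
    letI Abar : Matrix (Fin n) (Fin n) ℝ := fun i j => C (σ i) (σ j) / n
    letI r : Fin k → ℝ := fun a => ((univ.filter fun i => σ i = a).card : ℝ) / n
    letI R : Matrix (Fin k) (Fin k) ℝ := Matrix.diagonal r
    letI Rhalf : Matrix (Fin k) (Fin k) ℝ := Matrix.diagonal fun a => Real.sqrt (r a)
    ((Abar.mulVec u = ν • u) ↔ (ut ᵥ* (R * C) = ν • ut)) ∧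
      ((ut ᵥ* (R * C) = ν • ut) ↔
        ((Rhalf * C * Rhalf).mulVec (Rhalf.mulVec ut) = ν • Rhalf.mulVec ut)) := by
  set r : Fin k → ℝ := fun a => ((univ.filter fun i => σ i = a).card : ℝ) / n with hr
  set R : Matrix (Fin k) (Fin k) ℝ := Matrix.diagonal r with hR
  set Rhalf : Matrix (Fin k) (Fin k) ℝ := Matrix.diagonal fun a => Real.sqrt (r a) with hRh
  set Abar : Matrix (Fin n) (Fin n) ℝ := fun i j => C (σ i) (σ j) / n with hA
  have hCsym : ∀ a b, C a b = C b a := fun a b => (hC.apply a b).symm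
  have hrpos : ∀ a, 0 < r a := by
    intro a
    have hne : (univ.filter fun i => σ i = a).Nonempty := by
      obtain ⟨i, hi⟩ := hσ a
      exact ⟨i, by simp [hi]⟩
    rw [hr]
    exact div_pos (by exact_mod_cast card_pos.2 hne) (by exact_mod_cast hn)
  have hAb : ∀ i, Abar.mulVec u i = ∑ a, r a * C (σ i) a * ut a := by
    intro i
    rw [Matrix.mulVec, dotProduct]
    have h1 : ∀ j, Abar i j * u j = (fun b => C (σ i) b / n * ut b) (σ j) := by
      intro j; rw [hA, hu j]
    simp only [h1]
    rw [← Finset.sum_fiberwise' univ σ (fun b => C (σ i) b / n * ut b)]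
    apply Finset.sum_congr rfl
    intro b _
    rw [Finset.sum_const, nsmul_eq_mul]
    rw [hr]
    ring
  clear_value r R Rhalf Abar
  clear hr
  have hvec : ∀ b, (ut ᵥ* (R * C)) b = ∑ a, r a * C a b * ut a := by
    intro b
    rw [Matrix.vecMul, dotProduct]
    apply Finset.sum_congr rfl
    intro a _
    rw [Matrix.mul_apply]
    rw [Finset.sum_eq_single a (fun c _ hc => by
      rw [hR, Matrix.diagonal_apply_ne r (Ne.symm hc), zero_mul]) (by simp)]
    rw [hR, Matrix.diagonal_apply_eq]
    ring
  have hAb' : ∀ i, Abar.mulVec u i = (ut ᵥ* (R * C)) (σ i) := by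
    intro i
    rw [hAb, hvec]
    exact Finset.sum_congr rfl fun a _ => by rw [hCsym (σ i) a]
  refine ⟨⟨fun h => ?_, fun h => ?_⟩, ?_⟩
  · funext b
    obtain ⟨i, rfl⟩ := hσ b
    have := congrFun h i
    rw [hAb'] at this
    simpa [hu i] using this
  · funext i
    rw [hAb', h]
    simp [hu i]
  · have hRhs : ∀ b, (Rhalf * C * Rhalf).mulVec (Rhalf.mulVec ut) b
        = Real.sqrt (r b) * ∑ a, r a * C a b * ut a := by
      intro b
      rw [Matrix.mulVec, dotProduct, Finset.mul_sum]
      apply Finset.sum_congr rfl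
      intro a _
      have hsq : Real.sqrt (r a) * Real.sqrt (r a) = r a :=
        Real.mul_self_sqrt (hrpos a).le
      rw [hRh, Matrix.mul_diagonal, Matrix.diagonal_mul, Matrix.mulVec_diagonal,
        hCsym b a]
      linear_combination Real.sqrt (r b) * C a b * ut a * hsq
    constructor
    · intro h
      funext b
      rw [hRhs b, ← hvec b, h]
      rw [Pi.smul_apply, Pi.smul_apply, hRh, Matrix.mulVec_diagonal,
        smul_eq_mul, smul_eq_mul]
      ring
    · intro h
      funext b
      have hb := congrFun h b
      rw [hRhs b, ← hvec b] at hb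
      have hb' : Real.sqrt (r b) * (ut ᵥ* (R * C)) b
          = Real.sqrt (r b) * (ν * ut b) := by
        rw [hb, Pi.smul_apply, hRh, Matrix.mulVec_diagonal, smul_eq_mul]
        ring
      have hs : Real.sqrt (r b) ≠ 0 := (Real.sqrt_pos.2 (hrpos b)).ne'
      simpa using mul_left_cancel₀ hs hb'
end

section
/- Under the hypotheses of the previous theorem, assume in addition that V is partitioned into k nonempty clusters V_1,…,V_k and that each u_j is a step-vector, i.e., constant on every cluster V_a. Then, writing x_j^in = Endᵀ x_j, for the k-dimensional node representatives y_i = ((1/d_i) x_1^in(i), …, (1/d_i) x_k^in(i)) ∈ ℝ^k (i = 1,…,n) there exist points z_1,…,z_k ∈ ℝ^k such that Σ_{i=1}^n ‖ y_i − z_{a(i)} ‖² ≤ k ε, where a(i) denotes the index of the cluster containing node i. In particular, the k-means (k-variance) objective of the representatives with respect to the given clusters is at most kε. -/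
open Matrix

lemma dart_snd_fiber_card_eq_degree {V : Type*} [Fintype V] [DecidableEq V]
    (G : SimpleGraph V) [DecidableRel G.Adj] (v : V) :
    (Finset.univ.filter (fun d : G.Dart => d.snd = v)).card = G.degree v := by
  rw [← SimpleGraph.dart_fst_fiber_card_eq_degree]
  apply Finset.card_bij (fun d _ => d.symm)
  · intro d hd
    simp only [Finset.mem_filter, Finset.mem_univ, true_and] at hd ⊢
    simpa using hd
  · intro a ha b hb h
    have := congrArg SimpleGraph.Dart.symm h
    simpa using this
  · intro b hb
    refine ⟨b.symm, ?_, by simp⟩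
    simp only [Finset.mem_filter, Finset.mem_univ, true_and] at hb ⊢
    simpa using hb

/-- If moreover the nodes are partitioned into `k` nonempty clusters (by a surjective
assignment `τ`) and each `u_j` is a step-vector (constant on clusters), then the
`k`-dimensional node representatives `y_i = ((1/d_i)(Endᵀ x_1)_i, …, (1/d_i)(Endᵀ x_k)_i)`
admit cluster centers `z_1,…,z_k` with `Σ_i ‖y_i − z_{τ(i)}‖² ≤ k ε`; i.e., the
`k`-means (`k`-variance) objective with respect to the clusters is at most `k ε`. -/
theorem kmeans_objective_bound {V : Type*} [Fintype V] [DecidableEq V]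
    (G : SimpleGraph V) [DecidableRel G.Adj]
    (hdeg : ∀ i : V, 1 ≤ G.degree i)
    (k : ℕ) (ε : ℝ) (hε0 : 0 ≤ ε) (hε1 : ε ≤ 1)
    (x : Fin k → G.Dart → ℝ) (hx : ∀ j, x j ⬝ᵥ x j = 1)
    (u : Fin k → V → ℝ) (hu : ∀ j, u j ⬝ᵥ u j = 1)
    (hinner : ∀ j, Real.sqrt (1 - ε) ≤
      x j ⬝ᵥ ((Real.sqrt ((endMatrix G).mulVec (u j) ⬝ᵥ (endMatrix G).mulVec (u j)))⁻¹ •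
        (endMatrix G).mulVec (u j)))
    (τ : V → Fin k) (hτ : Function.Surjective τ)
    (hstep : ∀ j, ∀ i i' : V, τ i = τ i' → u j i = u j i') :
    ∃ z : Fin k → Fin k → ℝ,
      ∑ i : V, ∑ j : Fin k,
        (((G.degree i : ℝ))⁻¹ * (endMatrix G)ᵀ.mulVec (x j) i - z (τ i) j) ^ 2 ≤
      k * ε := by
  classical
  choose s hs using hτ
  set w : Fin k → G.Dart → ℝ := fun j => (endMatrix G).mulVec (u j) with hwdef
  have hwval : ∀ j (e : G.Dart), w j e = u j e.snd := by
    intro j e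
    simp [hwdef, endMatrix, Matrix.mulVec, dotProduct]
  -- q j ≥ 1
  have hq1 : ∀ j, (1 : ℝ) ≤ w j ⬝ᵥ w j := by
    intro j
    have : w j ⬝ᵥ w j = ∑ e : G.Dart, u j e.snd ^ 2 := by
      simp [dotProduct, hwval, sq]
    rw [this, ← Finset.sum_fiberwise Finset.univ (fun e : G.Dart => e.snd)
      (fun e => u j e.snd ^ 2)]
    calc (1 : ℝ) = ∑ i : V, u j i ^ 2 := by
          rw [← hu j]; simp [dotProduct, sq]
      _ ≤ ∑ i : V, ∑ e ∈ Finset.univ.filter (fun e : G.Dart => e.snd = i), u j e.snd ^ 2 := by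
          apply Finset.sum_le_sum
          intro i _
          have hcard : (Finset.univ.filter (fun e : G.Dart => e.snd = i)).card = G.degree i :=
            dart_snd_fiber_card_eq_degree G i
          have : ∑ e ∈ Finset.univ.filter (fun e : G.Dart => e.snd = i), u j e.snd ^ 2
              = (G.degree i : ℝ) * u j i ^ 2 := by
            rw [Finset.sum_congr rfl (fun e he => ?_), Finset.sum_const, hcard,
              nsmul_eq_mul]
            rw [Finset.mem_filter] at he
            rw [he.2]
          rw [this]
          have hd1 : (1:ℝ) ≤ (G.degree i : ℝ) := Nat.one_le_cast.mpr (hdeg i)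
          nlinarith [sq_nonneg (u j i)]
  set p : Fin k → ℝ := fun j => x j ⬝ᵥ w j with hpdef
  set q : Fin k → ℝ := fun j => w j ⬝ᵥ w j with hqdef
  have hqpos : ∀ j, (0 : ℝ) < q j := fun j => lt_of_lt_of_le one_pos (hq1 j)
  -- from hinner : p j / sqrt (q j) ≥ sqrt (1 - ε), hence p j ^ 2 / q j ≥ 1 - ε
  have hratio : ∀ j, 1 - ε ≤ p j ^ 2 / q j := by
    intro j
    have h := hinner j
    have hx' : x j ⬝ᵥ ((Real.sqrt (q j))⁻¹ • w j) = (Real.sqrt (q j))⁻¹ * p j := by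
      rw [dotProduct_smul]; rfl
    rw [hx'] at h
    have hsq : Real.sqrt (q j) > 0 := Real.sqrt_pos.mpr (hqpos j)
    have h1 : Real.sqrt (1 - ε) * Real.sqrt (q j) ≤ p j := by
      have := mul_le_mul_of_nonneg_right h hsq.le
      rwa [mul_comm (Real.sqrt (q j))⁻¹ (p j), mul_assoc, inv_mul_cancel₀ hsq.ne',
        mul_one] at this
    have h0 : 0 ≤ Real.sqrt (1 - ε) * Real.sqrt (q j) := by positivity
    have h2 : (Real.sqrt (1 - ε) * Real.sqrt (q j)) ^ 2 ≤ p j ^ 2 := by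
      apply sq_le_sq' <;> nlinarith
    rw [mul_pow, Real.sq_sqrt (by linarith), Real.sq_sqrt (le_of_lt (hqpos j))] at h2
    rw [le_div_iff₀ (hqpos j)]
    linarith
  refine ⟨fun a j => (p j / q j) * u j (s a), ?_⟩
  rw [Finset.sum_comm]
  have key : ∀ j : Fin k,
      ∑ i : V, (((G.degree i : ℝ))⁻¹ * (endMatrix G)ᵀ.mulVec (x j) i
        - (p j / q j) * u j (s (τ i))) ^ 2 ≤ ε := by
    intro j
    set c : ℝ := p j / q j with hcdef
    have husz : ∀ i : V, u j (s (τ i)) = u j i := by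
      intro i; exact hstep j (s (τ i)) i (by rw [hs])
    have hT : ∀ i : V, (endMatrix G)ᵀ.mulVec (x j) i
        = ∑ e ∈ Finset.univ.filter (fun e : G.Dart => e.snd = i), x j e := by
      intro i
      rw [Finset.sum_filter]
      simp [Matrix.mulVec, dotProduct, Matrix.transpose_apply, endMatrix, ite_mul]
    -- step 1: per-node Cauchy-Schwarz
    have step1 : ∀ i : V,
        (((G.degree i : ℝ))⁻¹ * (endMatrix G)ᵀ.mulVec (x j) i - c * u j i) ^ 2
          ≤ ∑ e ∈ Finset.univ.filter (fun e : G.Dart => e.snd = i),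
              (x j e - c * u j e.snd) ^ 2 := by
      intro i
      set S := Finset.univ.filter (fun e : G.Dart => e.snd = i) with hSdef
      have hcard : (S.card : ℝ) = (G.degree i : ℝ) := by
        exact_mod_cast congrArg Nat.cast (dart_snd_fiber_card_eq_degree G i)
      have hd1 : (1 : ℝ) ≤ (G.degree i : ℝ) := Nat.one_le_cast.mpr (hdeg i)
      have hdpos : (0 : ℝ) < (G.degree i : ℝ) := by linarith
      have hrw : ((G.degree i : ℝ))⁻¹ * (endMatrix G)ᵀ.mulVec (x j) i - c * u j i
          = ((G.degree i : ℝ))⁻¹ * ∑ e ∈ S, (x j e - c * u j e.snd) := by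
        rw [hT i, Finset.sum_sub_distrib]
        have : ∑ e ∈ S, c * u j e.snd = (G.degree i : ℝ) * (c * u j i) := by
          rw [Finset.sum_congr rfl (fun e he => ?_), Finset.sum_const, ← hcard,
            nsmul_eq_mul]
          rw [hSdef, Finset.mem_filter] at he
          rw [he.2]
        rw [this]
        field_simp
        rfl
      rw [hrw, mul_pow]
      have hcs : (∑ e ∈ S, (x j e - c * u j e.snd)) ^ 2
          ≤ (S.card : ℝ) * ∑ e ∈ S, (x j e - c * u j e.snd) ^ 2 := by
        exact_mod_cast sq_sum_le_card_mul_sum_sq (s := S) (f := fun e => x j e - c * u j e.snd)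
      have hsumnn : (0 : ℝ) ≤ ∑ e ∈ S, (x j e - c * u j e.snd) ^ 2 :=
        Finset.sum_nonneg fun e _ => sq_nonneg _
      calc ((G.degree i : ℝ))⁻¹ ^ 2 * (∑ e ∈ S, (x j e - c * u j e.snd)) ^ 2
          ≤ ((G.degree i : ℝ))⁻¹ ^ 2 * ((G.degree i : ℝ) * ∑ e ∈ S, (x j e - c * u j e.snd) ^ 2) := by
            apply mul_le_mul_of_nonneg_left _ (by positivity)
            rw [← hcard]; exact hcs
        _ = ((G.degree i : ℝ))⁻¹ * ∑ e ∈ S, (x j e - c * u j e.snd) ^ 2 := by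
            field_simp
        _ ≤ 1 * ∑ e ∈ S, (x j e - c * u j e.snd) ^ 2 := by
            apply mul_le_mul_of_nonneg_right _ hsumnn
            rw [inv_le_one_iff₀]; right; exact hd1
        _ = _ := one_mul _
    -- step 2: sum over all darts
    have step2 : ∑ i : V, ∑ e ∈ Finset.univ.filter (fun e : G.Dart => e.snd = i),
          (x j e - c * u j e.snd) ^ 2 = 1 - 2 * c * p j + c ^ 2 * q j := by
      rw [Finset.sum_fiberwise Finset.univ (fun e : G.Dart => e.snd)
        (fun e => (x j e - c * u j e.snd) ^ 2)]
      have : ∑ e : G.Dart, (x j e - c * u j e.snd) ^ 2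
          = (∑ e : G.Dart, x j e * x j e) - 2 * c * (∑ e : G.Dart, x j e * w j e)
            + c ^ 2 * (∑ e : G.Dart, w j e * w j e) := by
        rw [Finset.mul_sum, Finset.mul_sum, ← Finset.sum_sub_distrib, ← Finset.sum_add_distrib]
        apply Finset.sum_congr rfl
        intro e _
        rw [hwval]
        ring
      rw [this]
      have h1 : ∑ e : G.Dart, x j e * x j e = 1 := hx j
      have h2 : ∑ e : G.Dart, x j e * w j e = p j := rfl
      have h3 : ∑ e : G.Dart, w j e * w j e = q j := rfl
      rw [h1, h2, h3]
    calc ∑ i : V, (((G.degree i : ℝ))⁻¹ * (endMatrix G)ᵀ.mulVec (x j) i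
            - c * u j (s (τ i))) ^ 2
        = ∑ i : V, (((G.degree i : ℝ))⁻¹ * (endMatrix G)ᵀ.mulVec (x j) i
            - c * u j i) ^ 2 := by
          apply Finset.sum_congr rfl; intro i _; rw [husz i]
      _ ≤ ∑ i : V, ∑ e ∈ Finset.univ.filter (fun e : G.Dart => e.snd = i),
            (x j e - c * u j e.snd) ^ 2 := Finset.sum_le_sum fun i _ => step1 i
      _ = 1 - 2 * c * p j + c ^ 2 * q j := step2
      _ = 1 - p j ^ 2 / q j := by
          have hq' : q j ≠ 0 := (hqpos j).ne'
          rw [hcdef]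
          field_simp
          ring
      _ ≤ ε := by have := hratio j; linarith
  calc ∑ j : Fin k, ∑ i : V, (((G.degree i : ℝ))⁻¹ * (endMatrix G)ᵀ.mulVec (x j) i
          - (p j / q j) * u j (s (τ i))) ^ 2
      ≤ ∑ _j : Fin k, ε := Finset.sum_le_sum fun j _ => key j
    _ = k * ε := by simp [Finset.sum_const, nsmul_eq_mul]
end
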